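/- arXiv:1803.01844 — 4 statements merged into one kernel-verified Lean document; each statement's English description precedes it below -/
import Mathlib

section
/- Let x = [[1,2],[0,1]] and y = [[1,0],[2,1]] in SL₂(ℤ). Then the group homomorphism from the free group on two generators to SL₂(ℤ) sending the two generators to x and y respectively is injective (so the subgroup H = ⟨x, y⟩ is free of rank 2), and moreover H has finite index in SL₂(ℤ). -/
/-- The matrix `[[1,2],[0,1]]` as an element of `SL₂(ℤ)`. -/
def sanov_x : Matrix.SpecialLinearGroup (Fin 2) ℤ :=
  ⟨!![1, 2; 0, 1], by norm_num [Matrix.det_fin_two_of]⟩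

/-- The matrix `[[1,0],[2,1]]` as an element of `SL₂(ℤ)`. -/
def sanov_y : Matrix.SpecialLinearGroup (Fin 2) ℤ :=
  ⟨!![1, 0; 2, 1], by norm_num [Matrix.det_fin_two_of]⟩

open Matrix Pointwise

local notation "SL2Z" => Matrix.SpecialLinearGroup (Fin 2) ℤ

noncomputable section SanovAux

instance sanovAction : MulAction SL2Z (Fin 2 → ℤ) where
  smul g v := g.1.mulVec v
  one_smul v := by
    show (1 : SL2Z).1.mulVec v = v
    simp
  mul_smul g h v := by
    show ((g * h).1).mulVec v = g.1.mulVec (h.1.mulVec v)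
    rw [Matrix.SpecialLinearGroup.coe_mul, Matrix.mulVec_mulVec]

lemma sanov_smul_def (g : SL2Z) (v : Fin 2 → ℤ) : g • v = g.1.mulVec v := rfl

lemma sanov_mulVec (a b c d : ℤ) (v : Fin 2 → ℤ) :
    (!![a, b; c, d]).mulVec v = ![a * v 0 + b * v 1, c * v 0 + d * v 1] := by
  ext i
  fin_cases i <;> simp [Matrix.mulVec, dotProduct, Fin.sum_univ_two]

lemma sanov_x_coe_inv : ((sanov_x⁻¹ : SL2Z) : Matrix (Fin 2) (Fin 2) ℤ) = !![1, -2; 0, 1] := by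
  rw [Matrix.SpecialLinearGroup.SL2_inv_expl]
  ext i j
  fin_cases i <;> fin_cases j <;> simp [sanov_x]

lemma sanov_y_coe_inv : ((sanov_y⁻¹ : SL2Z) : Matrix (Fin 2) (Fin 2) ℤ) = !![1, 0; -2, 1] := by
  rw [Matrix.SpecialLinearGroup.SL2_inv_expl]
  ext i j
  fin_cases i <;> fin_cases j <;> simp [sanov_y]

lemma sanov_x_zpow (n : ℤ) :
    ((sanov_x ^ n : SL2Z) : Matrix (Fin 2) (Fin 2) ℤ) = !![1, 2 * n; 0, 1] := by
  induction n using Int.induction_on with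
  | zero => simp [Matrix.one_fin_two]
  | succ n ih =>
      rw [_root_.zpow_add_one, Matrix.SpecialLinearGroup.coe_mul, ih]
      show _ * (sanov_x : Matrix (Fin 2) (Fin 2) ℤ) = _
      rw [show ((sanov_x : SL2Z) : Matrix (Fin 2) (Fin 2) ℤ) = !![1, 2; 0, 1] from rfl,
        Matrix.mul_fin_two]
      ext i j
      fin_cases i <;> fin_cases j <;> simp <;> ring
  | pred n ih =>
      rw [_root_.zpow_sub_one, Matrix.SpecialLinearGroup.coe_mul, ih, sanov_x_coe_inv,
        Matrix.mul_fin_two]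
      ext i j
      fin_cases i <;> fin_cases j <;> simp <;> ring

lemma sanov_y_zpow (n : ℤ) :
    ((sanov_y ^ n : SL2Z) : Matrix (Fin 2) (Fin 2) ℤ) = !![1, 0; 2 * n, 1] := by
  induction n using Int.induction_on with
  | zero => simp [Matrix.one_fin_two]
  | succ n ih =>
      rw [_root_.zpow_add_one, Matrix.SpecialLinearGroup.coe_mul, ih]
      show _ * (sanov_y : Matrix (Fin 2) (Fin 2) ℤ) = _
      rw [show ((sanov_y : SL2Z) : Matrix (Fin 2) (Fin 2) ℤ) = !![1, 0; 2, 1] from rfl,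
        Matrix.mul_fin_two]
      ext i j
      fin_cases i <;> fin_cases j <;> simp <;> ring
  | pred n ih =>
      rw [_root_.zpow_sub_one, Matrix.SpecialLinearGroup.coe_mul, ih, sanov_y_coe_inv,
        Matrix.mul_fin_two]
      ext i j
      fin_cases i <;> fin_cases j <;> simp <;> ring

lemma sanov_key (a b n : ℤ) (hn : n ≠ 0) (h : a.natAbs < b.natAbs) :
    b.natAbs < (a + 2 * n * b).natAbs := by
  have h1 : 1 ≤ |n| := by
    rcases lt_or_gt_of_ne hn with h' | h' <;> rw [abs] <;> omega
  have hab : |a| < |b| := by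
    have e1 : |a| = (a.natAbs : ℤ) := Int.abs_eq_natAbs a
    have e2 : |b| = (b.natAbs : ℤ) := Int.abs_eq_natAbs b
    omega
  have e2 : |b| ≤ |n * b| := by
    rw [abs_mul]
    exact le_mul_of_one_le_left (abs_nonneg b) h1
  have e1 : |2 * n * b| = 2 * |n * b| := by
    rw [show 2 * n * b = 2 * (n * b) by ring, abs_mul]
    norm_num
  have e3 : |2 * n * b| - |a| ≤ |a + 2 * n * b| := by
    have := abs_sub_abs_le_abs_sub (2 * n * b) (-a)
    simpa [sub_neg_eq_add, add_comm] using this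
  have key : |b| < |a + 2 * n * b| := by linarith
  have f1 : |b| = (b.natAbs : ℤ) := Int.abs_eq_natAbs b
  have f2 : |a + 2 * n * b| = ((a + 2 * n * b).natAbs : ℤ) := Int.abs_eq_natAbs _
  omega

theorem sanov_injective :
    Function.Injective (FreeGroup.lift ![sanov_x, sanov_y] :
      FreeGroup (Fin 2) →* SL2Z) := by
  set a : Fin 2 → SL2Z := ![sanov_x, sanov_y] with ha
  have : (FreeGroup.lift a : FreeGroup (Fin 2) →* SL2Z) =
      (Monoid.CoprodI.lift fun i => FreeGroup.lift fun _ : Unit => a i).comp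
        (@freeGroupEquivCoprodI (Fin 2)).toMonoidHom := by
    ext i
    simp
  rw [this, MonoidHom.coe_comp]
  refine Function.Injective.comp ?_ (MulEquiv.injective freeGroupEquivCoprodI)
  let H : Fin 2 → Type := fun _ => FreeGroup Unit
  let f : ∀ i, H i →* SL2Z := fun i => FreeGroup.lift fun _ => a i
  let X : Fin 2 → Set (Fin 2 → ℤ) :=
    ![{v | (v 1).natAbs < (v 0).natAbs}, {v | (v 0).natAbs < (v 1).natAbs}]
  apply Monoid.CoprodI.lift_injective_of_ping_pong f ?_ X
  · -- nonempty
    intro i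
    fin_cases i
    · exact ⟨![1, 0], by simp [X]⟩
    · exact ⟨![0, 1], by simp [X]⟩
  · -- disjoint
    intro i j hij
    have : Disjoint (X i) (X j) := by
      rw [Set.disjoint_left]
      intro v hv1 hv2
      fin_cases i <;> fin_cases j <;> simp_all [X] <;> omega
    exact this
  · -- ping pong
    intro i j hij
    refine FreeGroup.freeGroupUnitEquivInt.forall_congr_left.mpr ?_
    intro n hne1
    change FreeGroup.lift (fun _ => a i) (FreeGroup.of () ^ n) • X j ⊆ X i
    simp only [map_zpow, FreeGroup.lift_apply_of]
    have hnne0 : n ≠ 0 := by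
      rintro rfl
      apply hne1
      simp [FreeGroup.freeGroupUnitEquivInt]
    clear hne1
    fin_cases i <;> fin_cases j <;> simp_all
    · -- x^n • X 1 ⊆ X 0
      rintro v ⟨q, hq, rfl⟩
      have hq' : (q 0).natAbs < (q 1).natAbs := by simpa [X] using hq
      show (sanov_x ^ n • q) ∈ X 0
      have : sanov_x ^ n • q = ![q 0 + 2 * n * q 1, q 1] := by
        rw [sanov_smul_def, sanov_x_zpow, sanov_mulVec]
        ext i; fin_cases i <;> simp <;> ring
      rw [this]
      simp only [X]
      show (_ : (Fin 2 → ℤ)) ∈ {v | (v 1).natAbs < (v 0).natAbs}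
      simp only [Set.mem_setOf_eq, Matrix.cons_val_one, Matrix.head_cons, Matrix.cons_val_zero]
      exact sanov_key _ _ _ hnne0 hq'
    · -- y^n • X 0 ⊆ X 1
      rintro v ⟨q, hq, rfl⟩
      have hq' : (q 1).natAbs < (q 0).natAbs := by simpa [X] using hq
      show (sanov_y ^ n • q) ∈ X 1
      have : sanov_y ^ n • q = ![q 0, q 1 + 2 * n * q 0] := by
        rw [sanov_smul_def, sanov_y_zpow, sanov_mulVec]
        ext i; fin_cases i <;> simp <;> ring
      rw [this]
      simp only [X]
      show (_ : (Fin 2 → ℤ)) ∈ {v | (v 0).natAbs < (v 1).natAbs}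
      simp only [Set.mem_setOf_eq, Matrix.cons_val_one, Matrix.head_cons, Matrix.cons_val_zero]
      exact sanov_key _ _ _ hnne0 hq'
  · -- cardinality
    right
    have h3 : (3 : Cardinal) ≤ Cardinal.aleph0 := by
      exact_mod_cast (Cardinal.nat_lt_aleph0 3).le
    exact ⟨0, le_trans h3 (Cardinal.aleph0_le_mk (FreeGroup Unit))⟩

/-! ### Finite index part -/

def sanovRed : SL2Z →* Matrix.SpecialLinearGroup (Fin 2) (ZMod 4) :=
  Matrix.SpecialLinearGroup.map (Int.castRingHom (ZMod 4))

lemma zmod4_mul_eq_zero : ∀ x y : ZMod 4, 2 * x = 0 → 2 * y = 0 → x * y = 0 := by decide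

def sanovS : Subgroup (Matrix.SpecialLinearGroup (Fin 2) (ZMod 4)) where
  carrier := {A | A.1 0 0 = 1 ∧ A.1 1 1 = 1 ∧ 2 * A.1 0 1 = 0 ∧ 2 * A.1 1 0 = 0}
  one_mem' := by
    refine ⟨?_, ?_, ?_, ?_⟩ <;> simp
  mul_mem' := by
    rintro A B ⟨ha1, ha2, ha3, ha4⟩ ⟨hb1, hb2, hb3, hb4⟩
    have hAB : ∀ i j, ((A * B).1) i j = A.1 i 0 * B.1 0 j + A.1 i 1 * B.1 1 j := by
      intro i j
      rw [Matrix.SpecialLinearGroup.coe_mul, Matrix.mul_apply, Fin.sum_univ_two]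
    refine ⟨?_, ?_, ?_, ?_⟩ <;> rw [hAB]
    · have h0 : A.1 0 1 * B.1 1 0 = 0 := zmod4_mul_eq_zero _ _ ha3 hb4
      linear_combination B.1 0 0 * ha1 + hb1 + h0
    · have h0 : A.1 1 0 * B.1 0 1 = 0 := zmod4_mul_eq_zero _ _ ha4 hb3
      linear_combination B.1 1 1 * ha2 + hb2 + h0
    · linear_combination 2 * B.1 0 1 * ha1 + B.1 1 1 * ha3 + hb3
    · linear_combination 2 * B.1 1 0 * ha2 + B.1 0 0 * ha4 + hb4
  inv_mem' := by
    rintro A ⟨ha1, ha2, ha3, ha4⟩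
    rw [Matrix.SpecialLinearGroup.SL2_inv_expl]
    refine ⟨?_, ?_, ?_, ?_⟩
    · simpa using ha2
    · simpa using ha1
    · show 2 * (-A.1 0 1) = 0
      linear_combination -ha3
    · show 2 * (-A.1 1 0) = 0
      linear_combination -ha4

lemma mem_sanovS (A : Matrix.SpecialLinearGroup (Fin 2) (ZMod 4)) :
    A ∈ sanovS ↔ A.1 0 0 = 1 ∧ A.1 1 1 = 1 ∧ 2 * A.1 0 1 = 0 ∧ 2 * A.1 1 0 = 0 := Iff.rfl

lemma sanov_shrink (v m : ℤ) (hm : m ≠ 0) (hpar : (v + m) % 2 = 1) :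
    ∃ k : ℤ, (v + 2 * m * k).natAbs < m.natAbs := by
  have h2m : (2 * m) ≠ 0 := by omega
  obtain ⟨q, hq⟩ : ∃ q, v = 2 * m * q + v % (2 * m) :=
    ⟨v / (2 * m), (Int.mul_ediv_add_emod v (2 * m)).symm⟩
  set r := v % (2 * m) with hr
  have hr0 : 0 ≤ r := Int.emod_nonneg v h2m
  have hrlt : r < |2 * m| := by rw [Int.abs_eq_natAbs]; exact Int.emod_lt v h2m
  have habs : |2 * m| = ((2 * m).natAbs : ℤ) := Int.abs_eq_natAbs _
  have hpar2 : r % 2 = v % 2 := Int.emod_emod_of_dvd v ⟨m, by ring⟩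
  rcases lt_or_ge r.natAbs m.natAbs with h | h
  · refine ⟨-q, ?_⟩
    have e : v + 2 * m * (-q) = r := by rw [hq]; ring
    rw [e]; exact h
  · rcases lt_or_gt_of_ne hm with hneg | hpos
    · refine ⟨-q + 1, ?_⟩
      have e : v + 2 * m * (-q + 1) = r + 2 * m := by rw [hq]; ring
      rw [e]; omega
    · refine ⟨-q - 1, ?_⟩
      have e : v + 2 * m * (-q - 1) = r - 2 * m := by rw [hq]; ring
      rw [e]; omega

def sanovH : Subgroup SL2Z := Subgroup.closure {sanov_x, sanov_y}

lemma sanov_x_mem : sanov_x ∈ sanovH := Subgroup.subset_closure (by simp)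
lemma sanov_y_mem : sanov_y ∈ sanovH := Subgroup.subset_closure (by simp)

lemma mem_sanovH_aux (n : ℕ) : ∀ A : SL2Z,
    (A.1 0 0).natAbs + (A.1 1 0).natAbs ≤ n →
    A.1 0 0 % 4 = 1 → A.1 0 1 % 2 = 0 → A.1 1 0 % 2 = 0 → A ∈ sanovH := by
  induction n using Nat.strong_induction_on with
  | _ n IH =>
    intro A hle ha hb hc
    have hdet : A.1 0 0 * A.1 1 1 - A.1 0 1 * A.1 1 0 = 1 := by
      have := A.2
      rwa [Matrix.det_fin_two] at this
    rcases eq_or_ne (A.1 1 0) 0 with h0 | h0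
    · -- lower-left is zero : A is a power of x
      have had : A.1 0 0 * A.1 1 1 = 1 := by
        rw [h0, mul_zero, sub_zero] at hdet; exact hdet
      have ha1 : A.1 0 0 = 1 := by
        rcases Int.isUnit_iff.mp (IsUnit.of_mul_eq_one _ had) with h | h
        · exact h
        · rw [h] at ha; norm_num at ha
      have hd1 : A.1 1 1 = 1 := by rw [ha1, one_mul] at had; exact had
      obtain ⟨k, hk⟩ : ∃ k, A.1 0 1 = 2 * k := ⟨A.1 0 1 / 2, by omega⟩
      have : A = sanov_x ^ k := by
        apply Subtype.ext
        rw [sanov_x_zpow, Matrix.eta_fin_two A.1, ha1, hd1, h0, hk]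
      rw [this]
      exact Subgroup.zpow_mem _ sanov_x_mem k
    · rcases Nat.lt_or_ge (A.1 1 0).natAbs (A.1 0 0).natAbs with hcase | hcase
      · -- reduce the upper-left entry using x
        obtain ⟨k, hk⟩ := sanov_shrink (A.1 0 0) (A.1 1 0) h0 (by omega)
        set B := sanov_x ^ k * A with hB
        have hBm : B.1 = !![A.1 0 0 + 2 * A.1 1 0 * k, A.1 0 1 + 2 * k * A.1 1 1;
            A.1 1 0, A.1 1 1] := by
          rw [hB, Matrix.SpecialLinearGroup.coe_mul, sanov_x_zpow]
          nth_rewrite 1 [Matrix.eta_fin_two A.1]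
          rw [Matrix.mul_fin_two]
          ext i j
          fin_cases i <;> fin_cases j <;> simp <;> ring
        have hB00 : B.1 0 0 = A.1 0 0 + 2 * A.1 1 0 * k := by rw [hBm]; simp
        have hB01 : B.1 0 1 = A.1 0 1 + 2 * k * A.1 1 1 := by rw [hBm]; simp
        have hB10 : B.1 1 0 = A.1 1 0 := by rw [hBm]; simp
        obtain ⟨c', hc'⟩ : ∃ c', A.1 1 0 = 2 * c' := ⟨A.1 1 0 / 2, by omega⟩
        have e4 : A.1 0 0 + 2 * A.1 1 0 * k = A.1 0 0 + 4 * (c' * k) := by rw [hc']; ring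
        have e2 : A.1 0 1 + 2 * k * A.1 1 1 = A.1 0 1 + 2 * (k * A.1 1 1) := by ring
        have hBmem : B ∈ sanovH := by
          apply IH ((B.1 0 0).natAbs + (B.1 1 0).natAbs) _ B le_rfl
          · rw [hB00]; omega
          · rw [hB01]; omega
          · rw [hB10]; omega
          · rw [hB00, hB10]; omega
        have : A = sanov_x ^ (-k) * B := by
          rw [hB, ← mul_assoc, ← _root_.zpow_add]
          simp
        rw [this]
        exact Subgroup.mul_mem _ (Subgroup.zpow_mem _ sanov_x_mem _) hBmem
      · -- reduce the lower-left entry using y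
        have ha0 : A.1 0 0 ≠ 0 := by omega
        obtain ⟨k, hk⟩ := sanov_shrink (A.1 1 0) (A.1 0 0) ha0 (by omega)
        set B := sanov_y ^ k * A with hB
        have hBm : B.1 = !![A.1 0 0, A.1 0 1;
            A.1 1 0 + 2 * A.1 0 0 * k, A.1 1 1 + 2 * k * A.1 0 1] := by
          rw [hB, Matrix.SpecialLinearGroup.coe_mul, sanov_y_zpow]
          nth_rewrite 1 [Matrix.eta_fin_two A.1]
          rw [Matrix.mul_fin_two]
          ext i j
          fin_cases i <;> fin_cases j <;> simp <;> ring
        have hB00 : B.1 0 0 = A.1 0 0 := by rw [hBm]; simp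
        have hB01 : B.1 0 1 = A.1 0 1 := by rw [hBm]; simp
        have hB10 : B.1 1 0 = A.1 1 0 + 2 * A.1 0 0 * k := by rw [hBm]; simp
        have e4 : A.1 1 0 + 2 * A.1 0 0 * k = A.1 1 0 + 2 * (A.1 0 0 * k) := by ring
        have hBmem : B ∈ sanovH := by
          apply IH ((B.1 0 0).natAbs + (B.1 1 0).natAbs) _ B le_rfl
          · rw [hB00]; omega
          · rw [hB01]; omega
          · rw [hB10]; omega
          · rw [hB00, hB10]; omega
        have : A = sanov_y ^ (-k) * B := by
          rw [hB, ← mul_assoc, ← _root_.zpow_add]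
          simp
        rw [this]
        exact Subgroup.mul_mem _ (Subgroup.zpow_mem _ sanov_y_mem _) hBmem

lemma sanov_comap_le : sanovS.comap sanovRed ≤ sanovH := by
  intro A hA
  rw [Subgroup.mem_comap, mem_sanovS] at hA
  obtain ⟨h1, _h2, h3, h4⟩ := hA
  have e : ∀ i j, (sanovRed A).1 i j = ((A.1 i j : ℤ) : ZMod 4) := by
    intro i j
    rfl
  rw [e] at h1 h3 h4
  have ha : A.1 0 0 % 4 = 1 := by
    rw [show (1 : ZMod 4) = ((1 : ℤ) : ZMod 4) by norm_num,
      ZMod.intCast_eq_intCast_iff] at h1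
    have h1' : A.1 0 0 % 4 = 1 % 4 := h1
    omega
  have hb : A.1 0 1 % 2 = 0 := by
    rw [show (2 : ZMod 4) * ((A.1 0 1 : ℤ) : ZMod 4) = (((2 * A.1 0 1 : ℤ)) : ZMod 4) by
      push_cast; ring, ZMod.intCast_zmod_eq_zero_iff_dvd] at h3
    omega
  have hc : A.1 1 0 % 2 = 0 := by
    rw [show (2 : ZMod 4) * ((A.1 1 0 : ℤ) : ZMod 4) = (((2 * A.1 1 0 : ℤ)) : ZMod 4) by
      push_cast; ring, ZMod.intCast_zmod_eq_zero_iff_dvd] at h4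
    omega
  exact mem_sanovH_aux ((A.1 0 0).natAbs + (A.1 1 0).natAbs) A le_rfl ha hb hc

lemma sanov_comap_finiteIndex : (sanovS.comap sanovRed).FiniteIndex := by
  constructor
  rw [Subgroup.index_comap, Subgroup.relIndex]
  exact Subgroup.FiniteIndex.index_ne_zero

end SanovAux

/-- The homomorphism `F₂ → SL₂(ℤ)` sending the two generators to `x` and `y` is injective
(so `H = ⟨x, y⟩` is free of rank 2), and `H` has finite index in `SL₂(ℤ)`. -/
theorem sanov_free_and_finite_index :
    Function.Injective (FreeGroup.lift ![sanov_x, sanov_y] :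
      FreeGroup (Fin 2) →* Matrix.SpecialLinearGroup (Fin 2) ℤ) ∧
    (Subgroup.closure {sanov_x, sanov_y} :
      Subgroup (Matrix.SpecialLinearGroup (Fin 2) ℤ)).FiniteIndex := by
  constructor
  · exact sanov_injective
  · have := sanov_comap_finiteIndex
    exact Subgroup.finiteIndex_of_le sanov_comap_le
end

section
/- Let a = [[1,4],[0,1]] and b = [[1,0],[4,1]] in SL₂(ℤ). Then there exists N such that for every prime p > N, the images r_p(a) and r_p(b) generate the full group SL₂(ℤ/pℤ). -/
/-- The matrix `[[1,4],[0,1]]` as an element of `SL₂(ℤ)`. -/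
def matA : Matrix.SpecialLinearGroup (Fin 2) ℤ :=
  ⟨!![1, 4; 0, 1], by norm_num [Matrix.det_fin_two_of]⟩

/-- The matrix `[[1,0],[4,1]]` as an element of `SL₂(ℤ)`. -/
def matB : Matrix.SpecialLinearGroup (Fin 2) ℤ :=
  ⟨!![1, 0; 4, 1], by norm_num [Matrix.det_fin_two_of]⟩


open Matrix

variable {F : Type*} [Field F]

/-- upper transvection -/
def myU (t : F) : Matrix.SpecialLinearGroup (Fin 2) F :=
  ⟨!![1, t; 0, 1], by simp [Matrix.det_fin_two_of]⟩

def myL (t : F) : Matrix.SpecialLinearGroup (Fin 2) F :=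
  ⟨!![1, 0; t, 1], by simp [Matrix.det_fin_two_of]⟩

lemma myU_mul (s t : F) : myU s * myU t = myU (s + t) := by
  ext i j
  simp only [Matrix.SpecialLinearGroup.coe_mul]
  fin_cases i <;> fin_cases j <;>
    simp [myU, Matrix.mul_apply, Fin.sum_univ_two] <;> ring

lemma myL_mul (s t : F) : myL s * myL t = myL (s + t) := by
  ext i j
  simp only [Matrix.SpecialLinearGroup.coe_mul]
  fin_cases i <;> fin_cases j <;>
    simp [myL, Matrix.mul_apply, Fin.sum_univ_two] <;> ring

lemma myU_pow (s : F) (n : ℕ) : (myU s) ^ n = myU (n * s) := by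
  induction n with
  | zero => ext i j; simp only [Matrix.SpecialLinearGroup.coe_pow, pow_zero]; fin_cases i <;> fin_cases j <;> simp [myU]
  | succ n ih => rw [pow_succ, ih, myU_mul]; push_cast; ring_nf

lemma myL_pow (s : F) (n : ℕ) : (myL s) ^ n = myL (n * s) := by
  induction n with
  | zero => ext i j; simp only [Matrix.SpecialLinearGroup.coe_pow, pow_zero]; fin_cases i <;> fin_cases j <;> simp [myL]
  | succ n ih => rw [pow_succ, ih, myL_mul]; push_cast; ring_nf

lemma decompC (a b c d : F) (hc : c ≠ 0) (hdet : a * d - b * c = 1) :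
    (⟨!![a, b; c, d], by rwa [Matrix.det_fin_two_of]⟩ :
      Matrix.SpecialLinearGroup (Fin 2) F) =
      myU ((a - 1) / c) * myL c * myU ((d - 1) / c) := by
  ext i j
  simp only [Matrix.SpecialLinearGroup.coe_mul]
  fin_cases i <;> fin_cases j <;>
    simp [myU, myL, Matrix.mul_apply, Fin.sum_univ_two] <;>
    field_simp <;>
    first
    | linear_combination hdet
    | linear_combination -hdet
    | linear_combination -2 * hdet
    | linear_combination 2 * hdet
    | linear_combination -3 * hdet
    | linear_combination 3 * hdet
    | ring

lemma mem_closure_UL (g : Matrix.SpecialLinearGroup (Fin 2) F) :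
    g ∈ Subgroup.closure (Set.range (myU (F := F)) ∪ Set.range (myL (F := F))) := by
  set H := Subgroup.closure (Set.range (myU (F := F)) ∪ Set.range (myL (F := F))) with hH
  have hU : ∀ t : F, myU t ∈ H := fun t =>
    Subgroup.subset_closure (Or.inl ⟨t, rfl⟩)
  have hL : ∀ t : F, myL t ∈ H := fun t =>
    Subgroup.subset_closure (Or.inr ⟨t, rfl⟩)
  induction g using Matrix.SpecialLinearGroup.fin_two_induction with
  | _ a b c d hdet =>
  by_cases hc : c ≠ 0
  · rw [decompC a b c d hc hdet]
    exact mul_mem (mul_mem (hU _) (hL _)) (hU _)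
  · push_neg at hc
    subst hc
    have had : a * d = 1 := by linear_combination hdet
    have hd : d ≠ 0 := by
      intro h; rw [h, mul_zero] at had; exact zero_ne_one had
    have hdet2 : (a + b) * d - b * d = 1 := by linear_combination hdet
    have pf1 : Matrix.det !![a, b; 0, d] = 1 := by rw [Matrix.det_fin_two_of]; exact hdet
    have pf2 : Matrix.det !![a + b, b; d, d] = 1 := by
      rw [Matrix.det_fin_two_of]; exact hdet2
    have key : (⟨!![a, b; 0, d], pf1⟩ :
        Matrix.SpecialLinearGroup (Fin 2) F) =
        (show Matrix.SpecialLinearGroup (Fin 2) F from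
          ⟨!![a + b, b; d, d], pf2⟩) * myL (F := F) (-1) := by
      ext i j
      rw [Matrix.SpecialLinearGroup.coe_mul]
      fin_cases i <;> fin_cases j <;>
        simp [myL, Matrix.mul_apply, Fin.sum_univ_two] <;> ring
    rw [key, decompC (a + b) b d d hd hdet2]
    exact mul_mem (mul_mem (mul_mem (hU _) (hL _)) (hU _)) (hL _)

theorem closure_U4_L4 (p : ℕ) [Fact p.Prime] (hp : 4 < p) :
    Subgroup.closure {myU (4 : ZMod p), myL (4 : ZMod p)} = ⊤ := by
  have h4 : (4 : ZMod p) ≠ 0 := by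
    have hnd : ¬ (p ∣ 4) := fun h => absurd (Nat.le_of_dvd (by norm_num) h) (by omega)
    have : ((4 : ℕ) : ZMod p) ≠ 0 := by
      rw [Ne, ZMod.natCast_eq_zero_iff]; exact hnd
    simpa using this
  set H := Subgroup.closure {myU (4 : ZMod p), myL (4 : ZMod p)} with hH
  have hA : myU (4 : ZMod p) ∈ H := Subgroup.subset_closure (by simp)
  have hB : myL (4 : ZMod p) ∈ H := Subgroup.subset_closure (by simp)
  have hU : ∀ t : ZMod p, myU t ∈ H := by
    intro t
    have : myU t = (myU (4 : ZMod p)) ^ (t / 4).val := by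
      rw [myU_pow]
      congr 1
      rw [ZMod.natCast_val, ZMod.cast_id, div_mul_cancel₀ _ h4]
    rw [this]; exact pow_mem hA _
  have hL : ∀ t : ZMod p, myL t ∈ H := by
    intro t
    have : myL t = (myL (4 : ZMod p)) ^ (t / 4).val := by
      rw [myL_pow]
      congr 1
      rw [ZMod.natCast_val, ZMod.cast_id, div_mul_cancel₀ _ h4]
    rw [this]; exact pow_mem hB _
  rw [eq_top_iff]
  intro g _
  have := mem_closure_UL g
  refine Subgroup.closure_le H |>.mpr ?_ this
  rintro x (⟨t, rfl⟩ | ⟨t, rfl⟩)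
  · exact hU t
  · exact hL t


lemma mapA (p : ℕ) [Fact p.Prime] :
    Matrix.SpecialLinearGroup.map (Int.castRingHom (ZMod p)) matA = myU (4 : ZMod p) := by
  ext i j
  simp only [Matrix.SpecialLinearGroup.map_apply_coe]
  fin_cases i <;> fin_cases j <;>
    simp [matA, myU, Matrix.SpecialLinearGroup.map, Matrix.map_apply]

lemma mapB (p : ℕ) [Fact p.Prime] :
    Matrix.SpecialLinearGroup.map (Int.castRingHom (ZMod p)) matB = myL (4 : ZMod p) := by
  ext i j
  simp only [Matrix.SpecialLinearGroup.map_apply_coe]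
  fin_cases i <;> fin_cases j <;>
    simp [matB, myL, Matrix.SpecialLinearGroup.map, Matrix.map_apply]

/-- There is an `N` such that for every prime `p > N`, the reductions mod `p` of
`a = [[1,4],[0,1]]` and `b = [[1,0],[4,1]]` generate all of `SL₂(ℤ/pℤ)`. -/
theorem reductions_generate_SL2 :
    ∃ N : ℕ, ∀ (p : ℕ) [Fact p.Prime], N < p →
      Subgroup.closure {Matrix.SpecialLinearGroup.map (Int.castRingHom (ZMod p)) matA,
          Matrix.SpecialLinearGroup.map (Int.castRingHom (ZMod p)) matB} = ⊤ := by
  refine ⟨4, fun p _ hp => ?_⟩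
  rw [mapA, mapB]
  exact closure_U4_L4 p hp
end

section
/- Let a = [[1,4],[0,1]] and b = [[1,0],[4,1]] in SL₂(ℤ). There exists N such that, setting P = {p : p prime, p ≡ 1 (mod 4), p > N} and K = ∏_{p ∈ P} SL₂(ℤ/pℤ) (a compact group with the product topology), the subgroup of K generated by the two elements α = (r_p(a))_{p ∈ P} and β = (r_p(b))_{p ∈ P} is dense in K. -/
/-- Each finite group `SL₂(ℤ/nℤ)` carries the discrete topology. -/
instance (n : ℕ) : TopologicalSpace (Matrix.SpecialLinearGroup (Fin 2) (ZMod n)) := ⊥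

instance (n : ℕ) : DiscreteTopology (Matrix.SpecialLinearGroup (Fin 2) (ZMod n)) := ⟨rfl⟩

instance (n : ℕ) : IsTopologicalGroup (Matrix.SpecialLinearGroup (Fin 2) (ZMod n)) where
  continuous_mul := continuous_of_discreteTopology
  continuous_inv := continuous_of_discreteTopology

section Unipotent

variable {R : Type*} [CommRing R]

/-- Upper unipotent matrix. -/
def upU (x : R) : Matrix.SpecialLinearGroup (Fin 2) R :=
  ⟨!![1, x; 0, 1], by norm_num [Matrix.det_fin_two_of]⟩

/-- Lower unipotent matrix. -/
def loL (y : R) : Matrix.SpecialLinearGroup (Fin 2) R :=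
  ⟨!![1, 0; y, 1], by norm_num [Matrix.det_fin_two_of]⟩

lemma upU_mul (x y : R) : upU x * upU y = upU (x + y) := by
  apply Subtype.ext
  rw [Matrix.SpecialLinearGroup.coe_mul]
  simp [upU, Matrix.mul_fin_two, add_comm]

lemma loL_mul (x y : R) : loL x * loL y = loL (x + y) := by
  apply Subtype.ext
  rw [Matrix.SpecialLinearGroup.coe_mul]
  simp [loL, Matrix.mul_fin_two]

lemma upU_zero : upU (0 : R) = 1 := by
  apply Subtype.ext
  ext i j
  fin_cases i <;> fin_cases j <;> simp [upU, Matrix.one_apply]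

lemma loL_zero : loL (0 : R) = 1 := by
  apply Subtype.ext
  ext i j
  fin_cases i <;> fin_cases j <;> simp [loL, Matrix.one_apply]

/-- `upU` as a monoid hom from `Multiplicative R`. -/
def upUHom : Multiplicative R →* Matrix.SpecialLinearGroup (Fin 2) R where
  toFun x := upU x.toAdd
  map_one' := upU_zero
  map_mul' x y := by simp [upU_mul]

/-- `loL` as a monoid hom from `Multiplicative R`. -/
def loLHom : Multiplicative R →* Matrix.SpecialLinearGroup (Fin 2) R where
  toFun x := loL x.toAdd
  map_one' := loL_zero
  map_mul' x y := by simp [loL_mul]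

lemma upU_zpow (x : R) (n : ℤ) : (upU x) ^ n = upU (n • x) := by
  have := map_zpow upUHom (Multiplicative.ofAdd x) n
  simpa [upUHom, ← ofAdd_zsmul] using this.symm

lemma loL_zpow (x : R) (n : ℤ) : (loL x) ^ n = loL (n • x) := by
  have := map_zpow loLHom (Multiplicative.ofAdd x) n
  simpa [loLHom, ← ofAdd_zsmul] using this.symm

variable {F : Type*} [Field F]

lemma ULU_decomp (g : Matrix.SpecialLinearGroup (Fin 2) F) (hc : g.1 1 0 ≠ 0) :
    g = upU ((g.1 0 0 - 1) * (g.1 1 0)⁻¹) * loL (g.1 1 0) *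
        upU ((g.1 1 1 - 1) * (g.1 1 0)⁻¹) := by
  have hdet : g.1 0 0 * g.1 1 1 - g.1 0 1 * g.1 1 0 = 1 := by
    have := g.2
    rwa [Matrix.det_fin_two] at this
  apply Subtype.ext
  rw [Matrix.SpecialLinearGroup.coe_mul, Matrix.SpecialLinearGroup.coe_mul]
  simp only [Matrix.SpecialLinearGroup.coe_mul, upU, loL, Matrix.mul_fin_two]
  ext i j
  (fin_cases i <;> fin_cases j <;> simp <;> field_simp) <;>
    [ring; linear_combination -hdet; ring]

lemma exists_ULUL (g : Matrix.SpecialLinearGroup (Fin 2) F) :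
    ∃ x y z w : F, g = upU x * loL y * upU z * loL w := by
  by_cases hc : g.1 1 0 ≠ 0
  · refine ⟨(g.1 0 0 - 1) * (g.1 1 0)⁻¹, g.1 1 0, (g.1 1 1 - 1) * (g.1 1 0)⁻¹, 0, ?_⟩
    rw [loL_zero, mul_one]
    exact ULU_decomp g hc
  · push_neg at hc
    have hdet : g.1 0 0 * g.1 1 1 - g.1 0 1 * g.1 1 0 = 1 := by
      have := g.2; rwa [Matrix.det_fin_two] at this
    have hd : g.1 1 1 ≠ 0 := by
      intro h
      rw [hc, h] at hdet
      simp at hdet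
    set g' := g * loL 1 with hg'
    have hc' : g'.1 1 0 ≠ 0 := by
      have he : g'.1 1 0 = g.1 1 1 := by
        rw [hg', Matrix.SpecialLinearGroup.coe_mul]
        simp [hg', loL, Matrix.SpecialLinearGroup.coe_mul, Matrix.mul_apply,
          Fin.sum_univ_two, hc]
      rw [he]; exact hd
    refine ⟨(g'.1 0 0 - 1) * (g'.1 1 0)⁻¹, g'.1 1 0, (g'.1 1 1 - 1) * (g'.1 1 0)⁻¹, -1, ?_⟩
    have hdec := ULU_decomp g' hc'
    have hrec : g = g' * loL (-1) := by
      rw [hg', mul_assoc, loL_mul]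
      norm_num [loL_zero]
    rw [hrec]
    conv_lhs => rw [hdec]

end Unipotent

/-- Chinese remainder: simultaneous congruences for distinct primes. -/
lemma crt_subtype {ι : Type*} (q : ι → ℕ) (hq : ∀ i, (q i).Prime)
    (hinj : Function.Injective q) (I : Finset ι) (t : ∀ i, ZMod (q i)) :
    ∃ n : ℤ, ∀ i ∈ I, ((n : ℤ) : ZMod (q i)) = t i := by
  classical
  have hco : Pairwise (Function.onFun Nat.Coprime fun i : I => q i) := by
    intro i j hij
    refine (Nat.coprime_primes (hq i) (hq j)).mpr ?_
    intro h
    exact hij (Subtype.ext (hinj h))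
  let e := ZMod.prodEquivPi (fun i : I => q i) hco
  obtain ⟨n, hn⟩ := ZMod.intCast_surjective (n := ∏ i : I, q i)
    (e.symm (fun i : I => t i))
  refine ⟨n, fun i hi => ?_⟩
  have key : ((n : ℤ) : ZMod (q (⟨i, hi⟩ : I))) = e ((n : ℤ) : ZMod (∏ i : I, q i)) ⟨i, hi⟩ := by
    have := map_intCast ((Pi.evalRingHom (fun i : I => ZMod (q i)) ⟨i, hi⟩).comp
      (e : ZMod (∏ i : I, q i) →+* Π i : I, ZMod (q i))) n
    exact this.symm
  rw [hn] at key
  exact key.trans (congrFun (e.apply_symm_apply _) ⟨i, hi⟩)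

/-- There is an `N` such that, with `P = {p prime : p ≡ 1 (mod 4), p > N}` and
`K = ∏_{p ∈ P} SL₂(ℤ/pℤ)` (a compact group with the product topology, each factor
discrete), the subgroup of `K` generated by `α = (r_p(a))_p` and `β = (r_p(b))_p`
is dense in `K`, where `a = [[1,4],[0,1]]` and `b = [[1,0],[4,1]]`. -/
theorem dense_subgroup_in_product :
    ∃ N : ℕ,
      Dense ((Subgroup.closure
          {fun p : {p : ℕ // p.Prime ∧ p % 4 = 1 ∧ N < p} =>
              Matrix.SpecialLinearGroup.map (Int.castRingHom (ZMod p.1)) matA,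
            fun p : {p : ℕ // p.Prime ∧ p % 4 = 1 ∧ N < p} =>
              Matrix.SpecialLinearGroup.map (Int.castRingHom (ZMod p.1)) matB} :
          Subgroup (∀ p : {p : ℕ // p.Prime ∧ p % 4 = 1 ∧ N < p},
            Matrix.SpecialLinearGroup (Fin 2) (ZMod p.1))) : Set (∀ p : {p : ℕ // p.Prime ∧ p % 4 = 1 ∧ N < p},
            Matrix.SpecialLinearGroup (Fin 2) (ZMod p.1))) := by
  classical
  refine ⟨0, ?_⟩
  set ι := {p : ℕ // p.Prime ∧ p % 4 = 1 ∧ 0 < p} with hι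
  -- basic facts about the primes in ι
  have hprime : ∀ p : ι, p.1.Prime := fun p => p.2.1
  haveI : ∀ p : ι, Fact p.1.Prime := fun p => ⟨hprime p⟩
  have hinj : Function.Injective (fun p : ι => p.1) := fun p q h => Subtype.ext h
  have h4 : ∀ p : ι, (4 : ZMod p.1) ≠ 0 := by
    intro p h
    haveI : NeZero p.1 := ⟨(hprime p).pos.ne'⟩
    have h' : ((4 : ℕ) : ZMod p.1) = 0 := by rw [Nat.cast_ofNat]; exact h
    have : (p.1 : ℕ) ∣ 4 := (ZMod.natCast_eq_zero_iff 4 p.1).mp h'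
    have hp2 : p.1 = 2 := by
      have := (Nat.prime_dvd_prime_iff_eq (hprime p) Nat.prime_two).mp
        ((Nat.Prime.dvd_of_dvd_pow (hprime p) (by simpa using this : (p.1 : ℕ) ∣ 2 ^ 2)))
      exact this
    have := p.2.2.1
    rw [hp2] at this
    norm_num at this
  -- identify the generators
  set α : ∀ p : ι, Matrix.SpecialLinearGroup (Fin 2) (ZMod p.1) :=
    fun p => Matrix.SpecialLinearGroup.map (Int.castRingHom (ZMod p.1)) matA with hα
  set β : ∀ p : ι, Matrix.SpecialLinearGroup (Fin 2) (ZMod p.1) :=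
    fun p => Matrix.SpecialLinearGroup.map (Int.castRingHom (ZMod p.1)) matB with hβ
  have hαU : ∀ p : ι, α p = upU (4 : ZMod p.1) := by
    intro p
    apply Subtype.ext
    ext i j
    fin_cases i <;> fin_cases j <;>
      simp only [hα, Matrix.SpecialLinearGroup.map_apply_coe] <;>
      simp [hα, matA, upU, Matrix.SpecialLinearGroup.map_apply_coe, Matrix.map_apply]
  have hβL : ∀ p : ι, β p = loL (4 : ZMod p.1) := by
    intro p
    apply Subtype.ext
    ext i j
    fin_cases i <;> fin_cases j <;>
      simp only [hβ, Matrix.SpecialLinearGroup.map_apply_coe] <;>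
      simp [hβ, matB, loL, Matrix.SpecialLinearGroup.map_apply_coe, Matrix.map_apply]
  set H : Subgroup (∀ p : ι, Matrix.SpecialLinearGroup (Fin 2) (ZMod p.1)) :=
    Subgroup.closure {α, β} with hH
  have hαH : α ∈ H := Subgroup.subset_closure (by simp)
  have hβH : β ∈ H := Subgroup.subset_closure (by simp)
  -- upper unipotent tuples are in the closure of H
  have hUmem : ∀ x : ∀ p : ι, ZMod p.1,
      (fun p => upU (x p)) ∈ closure (H : Set (∀ p : ι, _)) := by
    intro x
    rw [mem_closure_iff]
    intro O hO hxO
    obtain ⟨I, u, h1, h2⟩ := isOpen_pi_iff.mp hO _ hxO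
    obtain ⟨n, hn⟩ := crt_subtype (fun p : ι => p.1) hprime hinj I
      (fun p => x p * (4 : ZMod p.1)⁻¹)
    refine ⟨α ^ n, ?_, H.zpow_mem hαH n⟩
    apply h2
    intro p hp
    have hcoord : (α ^ n) p = upU (x p) := by
      have : (α ^ n) p = (α p) ^ n := rfl
      rw [this, hαU p, upU_zpow]
      congr 1
      rw [zsmul_eq_mul, hn p hp]
      rw [mul_assoc, inv_mul_cancel₀ (h4 p), mul_one]
    rw [hcoord]
    exact (h1 p hp).2
  have hLmem : ∀ y : ∀ p : ι, ZMod p.1,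
      (fun p => loL (y p)) ∈ closure (H : Set (∀ p : ι, _)) := by
    intro y
    rw [mem_closure_iff]
    intro O hO hyO
    obtain ⟨I, u, h1, h2⟩ := isOpen_pi_iff.mp hO _ hyO
    obtain ⟨n, hn⟩ := crt_subtype (fun p : ι => p.1) hprime hinj I
      (fun p => y p * (4 : ZMod p.1)⁻¹)
    refine ⟨β ^ n, ?_, H.zpow_mem hβH n⟩
    apply h2
    intro p hp
    have hcoord : (β ^ n) p = loL (y p) := by
      have : (β ^ n) p = (β p) ^ n := rfl
      rw [this, hβL p, loL_zpow]
      congr 1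
      rw [zsmul_eq_mul, hn p hp]
      rw [mul_assoc, inv_mul_cancel₀ (h4 p), mul_one]
    rw [hcoord]
    exact (h1 p hp).2
  -- conclude
  rw [dense_iff_closure_eq, Set.eq_univ_iff_forall]
  intro g
  have hdec : ∀ p : ι, ∃ x y z w : ZMod p.1, g p = upU x * loL y * upU z * loL w :=
    fun p => exists_ULUL (g p)
  choose x y z w hxyzw using hdec
  have hg : g = (fun p => upU (x p)) * (fun p => loL (y p)) *
      (fun p => upU (z p)) * (fun p => loL (w p)) := by
    funext p
    exact hxyzw p
  set S := H.topologicalClosure with hS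
  have hSc : (S : Set (∀ p : ι, Matrix.SpecialLinearGroup (Fin 2) (ZMod p.1))) =
      closure (H : Set _) := rfl
  have : g ∈ S := by
    rw [hg]
    exact S.mul_mem (S.mul_mem (S.mul_mem
      (by rw [← SetLike.mem_coe, hSc]; exact hUmem x)
      (by rw [← SetLike.mem_coe, hSc]; exact hLmem y))
      (by rw [← SetLike.mem_coe, hSc]; exact hUmem z))
      (by rw [← SetLike.mem_coe, hSc]; exact hLmem w)
  rw [← hSc]
  exact this
end

section
/- Let K₁ be a compact metrizable topological group, let c ∈ K₁ be such that the cyclic subgroup generated by c is dense in K₁, let L be a compact metrizable topological group that is not abelian, and let φ₀ : K₁ → L be a measurable function. Define T : K₁ × L → K₁ × L by T(x, y) = (cx, φ₀(x)·y), and suppose T preserves the Haar probability measure μ_{K₁} ⊗ μ_L and is ergodic with respect to it. Then the family of iterates {Tⁿ : n ∈ ℕ} is not equicontinuous. -/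
open MeasureTheory Filter Topology

/-- Let `K₁` be a compact metrizable topological group, `c ∈ K₁` with dense cyclic subgroup,
`L` a compact metrizable non-abelian topological group, `φ₀ : K₁ → L` measurable, and let
`T(x, y) = (c·x, φ₀(x)·y)`. If `T` preserves the Haar probability measure `μ_{K₁} ⊗ μ_L`
and is ergodic with respect to it, then for any metric on `K₁ × L` inducing the product
topology, the family of iterates `{Tⁿ : n ∈ ℕ}` is not equicontinuous: it is not the case
that for every point `z` and every `ε > 0` there is a neighborhood `U` of `z` with
`dist (Tⁿ z) (Tⁿ z') < ε` for all `z' ∈ U` and all `n`. -/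
theorem skew_product_iterates_not_equicontinuous
    {K₁ L : Type*}
    [TopologicalSpace K₁] [TopologicalSpace.MetrizableSpace K₁] [CompactSpace K₁]
    [Group K₁] [IsTopologicalGroup K₁] [MeasurableSpace K₁] [BorelSpace K₁]
    [TopologicalSpace L] [TopologicalSpace.MetrizableSpace L] [CompactSpace L]
    [Group L] [IsTopologicalGroup L] [MeasurableSpace L] [BorelSpace L]
    (hL : ∃ y y' : L, y * y' ≠ y' * y)
    (c : K₁) (hc : Dense ((Subgroup.zpowers c : Subgroup K₁) : Set K₁))
    (φ₀ : K₁ → L) (hφ : Measurable φ₀)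
    (T : K₁ × L → K₁ × L) (hT : ∀ z : K₁ × L, T z = (c * z.1, φ₀ z.1 * z.2))
    (μ : Measure K₁) (ν : Measure L)
    [μ.IsHaarMeasure] [IsProbabilityMeasure μ]
    [ν.IsHaarMeasure] [IsProbabilityMeasure ν]
    (hTerg : Ergodic T (μ.prod ν)) :
    ∀ dm : MetricSpace (K₁ × L),
      dm.toUniformSpace.toTopologicalSpace = (instTopologicalSpaceProd :
        TopologicalSpace (K₁ × L)) →
      ¬ ∀ (z : K₁ × L) (ε : ℝ), 0 < ε → ∃ U ∈ nhds z, ∀ z' ∈ U, ∀ n : ℕ,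
          @dist _ dm.toDist (T^[n] z) (T^[n] z') < ε := by
  intro dm hdm H
  -- basic instances
  haveI : Measure.IsOpenPosMeasure μ :=
    isOpenPosMeasure_of_mulLeftInvariant_of_compact Set.univ isCompact_univ
      (by simp)
  haveI : Measure.IsOpenPosMeasure ν :=
    isOpenPosMeasure_of_mulLeftInvariant_of_compact Set.univ isCompact_univ
      (by simp)
  -- neighborhood basis of metric balls for the product topology
  have hbase : ∀ x : K₁ × L, (nhds x).HasBasis (fun ε : ℝ => 0 < ε)
      (fun ε => @Metric.ball _ dm.toPseudoMetricSpace x ε) := by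
    intro x
    have h := @Metric.nhds_basis_ball _ dm.toPseudoMetricSpace x
    rwa [hdm] at h
  -- continuity of the iterates
  have hTcont : ∀ n : ℕ, Continuous (T^[n]) := by
    intro n
    rw [continuous_iff_continuousAt]
    intro z
    rw [ContinuousAt, (hbase (T^[n] z)).tendsto_right_iff]
    intro ε hε
    obtain ⟨U, hU, h⟩ := H z ε hε
    filter_upwards [hU] with z' hz'
    have := h z' hz' n
    rw [Metric.mem_ball]
    rwa [@dist_comm _ dm.toPseudoMetricSpace]
  -- continuity of dm.dist w.r.t. the product topology
  have hdistcont : Continuous (fun p : (K₁ × L) × (K₁ × L) =>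
      @dist _ dm.toDist p.1 p.2) := by
    have h := @continuous_dist _ dm.toPseudoMetricSpace
    rwa [hdm] at h
  -- commuting helper
  have hext : ∀ S : K₁ × L → K₁ × L, (∀ z, S (T z) = T (S z)) →
      ∀ (n : ℕ) (z), S (T^[n] z) = T^[n] (S z) := by
    intro S hS n
    induction n with
    | zero => intro z; simp
    | succ n ih =>
      intro z
      rw [Function.iterate_succ_apply, Function.iterate_succ_apply, ih, hS]
  have hiter : ∀ (m n : ℕ) (z : K₁ × L), T^[m] (T^[n] z) = T^[n] (T^[m] z) := by
    intro m n z
    rw [← Function.iterate_add_apply, ← Function.iterate_add_apply, add_comm]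
  -- full measure of the set of points whose orbit hits a given open set
  have hAU : ∀ U : Set (K₁ × L), IsOpen U → U.Nonempty →
      (μ.prod ν) (⋃ n : ℕ, T^[n] ⁻¹' U)ᶜ = 0 := by
    intro U hUo hUne
    set A := ⋃ n : ℕ, T^[n] ⁻¹' U with hA
    have hAopen : IsOpen A := isOpen_iUnion fun n => hUo.preimage (hTcont n)
    have hm : NullMeasurableSet A (μ.prod ν) := hAopen.measurableSet.nullMeasurableSet
    have hsub : T ⁻¹' A ⊆ A := by
      intro z hz
      simp only [hA, Set.mem_preimage, Set.mem_iUnion] at hz ⊢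
      obtain ⟨n, hn⟩ := hz
      exact ⟨n + 1, by rwa [Function.iterate_succ_apply]⟩
    rcases hTerg.ae_empty_or_univ_of_preimage_ae_le hm hsub.eventuallyLE with h | h
    · exfalso
      have h0 : (μ.prod ν) A = 0 := ae_eq_empty.mp h
      have hUpos : (μ.prod ν) U ≠ 0 := hUo.measure_ne_zero _ hUne
      have hsubU : U ⊆ A := fun z hz => Set.mem_iUnion.mpr ⟨0, by simpa⟩
      exact hUpos (measure_mono_null hsubU h0)
    · exact ae_eq_univ.mp h
  -- a point with dense orbit
  obtain ⟨B, hBcount, -, hBbasis⟩ := TopologicalSpace.exists_countable_basis (K₁ × L)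
  obtain ⟨z₀, hz₀⟩ : ∃ z₀ : K₁ × L, ∀ U ∈ B, U.Nonempty → ∃ n : ℕ, T^[n] z₀ ∈ U := by
    by_contra hcon
    push_neg at hcon
    have hDc : (μ.prod ν) (⋃ U ∈ {U ∈ B | U.Nonempty}, (⋃ n : ℕ, T^[n] ⁻¹' U)ᶜ) = 0 := by
      refine (measure_biUnion_null_iff (hBcount.mono (Set.sep_subset _ _))).mpr ?_
      rintro U ⟨hUB, hUne⟩
      exact hAU U (hBbasis.isOpen hUB) hUne
    have : (⋃ U ∈ {U ∈ B | U.Nonempty}, (⋃ n : ℕ, T^[n] ⁻¹' U)ᶜ) = Set.univ := by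
      rw [Set.eq_univ_iff_forall]
      intro z
      obtain ⟨U, hUB, hUne, hU⟩ := hcon z
      simp only [Set.mem_iUnion, Set.mem_compl_iff, Set.mem_sep_iff]
      refine ⟨U, ⟨hUB, hUne⟩, ?_⟩
      simp only [Set.mem_iUnion, Set.mem_preimage]
      push_neg
      exact hU
    rw [this, measure_univ] at hDc
    exact one_ne_zero hDc
  have hdense : Dense (Set.range fun n : ℕ => T^[n] z₀) := by
    rw [hBbasis.dense_iff]
    intro U hU hUne
    obtain ⟨n, hn⟩ := hz₀ U hU hUne
    exact ⟨T^[n] z₀, hn, ⟨n, rfl⟩⟩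
  -- ultrafilter limit maps
  let lf : Ultrafilter ℕ → (K₁ × L) → (K₁ × L) := fun F z =>
    (F.map fun n => T^[n] z).lim
  have hlim : ∀ (F : Ultrafilter ℕ) (z : K₁ × L),
      Tendsto (fun n => T^[n] z) (F : Filter ℕ) (nhds (lf F z)) :=
    fun F z => (F.map fun n => T^[n] z).le_nhds_lim
  -- limit maps commute with continuous maps commuting with the iterates
  have hcomm : ∀ (F : Ultrafilter ℕ) (S : K₁ × L → K₁ × L), Continuous S →
      (∀ (n : ℕ) (z), S (T^[n] z) = T^[n] (S z)) → ∀ z, S (lf F z) = lf F (S z) := by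
    intro F S hScont hScomm z
    have h1 : Tendsto (fun n => T^[n] (S z)) (F : Filter ℕ) (nhds (lf F (S z))) :=
      hlim F (S z)
    have h2 : Tendsto (fun n => S (T^[n] z)) (F : Filter ℕ) (nhds (S (lf F z))) :=
      (hScont.tendsto _).comp (hlim F z)
    have heq : (fun n => S (T^[n] z)) = fun n => T^[n] (S z) := funext fun n => hScomm n z
    exact tendsto_nhds_unique (heq ▸ h2) h1
  -- limit maps are continuous (by equicontinuity)
  have hucont : ∀ F : Ultrafilter ℕ, Continuous (lf F) := by
    intro F
    rw [continuous_iff_continuousAt]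
    intro z
    rw [ContinuousAt, (hbase (lf F z)).tendsto_right_iff]
    intro ε hε
    obtain ⟨U, hU, h⟩ := H z (ε / 2) (half_pos hε)
    filter_upwards [hU] with z' hz'
    have hd : Tendsto (fun n => @dist _ dm.toDist (T^[n] z) (T^[n] z'))
        (F : Filter ℕ) (nhds (@dist _ dm.toDist (lf F z) (lf F z'))) :=
      (hdistcont.tendsto _).comp ((hlim F z).prodMk_nhds (hlim F z'))
    have hle : @dist _ dm.toDist (lf F z) (lf F z') ≤ ε / 2 :=
      le_of_tendsto hd (Eventually.of_forall fun n => (h z' hz' n).le)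
    rw [Metric.mem_ball]
    rw [@dist_comm _ dm.toPseudoMetricSpace]
    exact lt_of_le_of_lt hle (by linarith)
  -- limit maps commute with the iterates
  have hlcommT : ∀ (F : Ultrafilter ℕ) (n : ℕ) (z : K₁ × L),
      lf F (T^[n] z) = T^[n] (lf F z) := by
    intro F n z
    exact (hcomm F (T^[n]) (hTcont n) (fun m w => hiter n m w) z).symm
  -- every point is an ultrafilter limit of the orbit of z₀
  have hexists : ∀ w : K₁ × L, ∃ F : Ultrafilter ℕ, lf F z₀ = w := by
    intro w
    have hw : w ∈ closure (Set.range fun n : ℕ => T^[n] z₀) := hdense w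
    have hne : (Filter.comap (fun n : ℕ => T^[n] z₀) (nhds w)).NeBot := by
      rw [Filter.comap_neBot_iff]
      intro V hV
      obtain ⟨v, hv1, n, rfl⟩ := mem_closure_iff_nhds.mp hw V hV
      exact ⟨n, hv1⟩
    refine ⟨Ultrafilter.of (Filter.comap (fun n : ℕ => T^[n] z₀) (nhds w)), ?_⟩
    have hFle : Tendsto (fun n : ℕ => T^[n] z₀)
        (Ultrafilter.of (Filter.comap (fun n : ℕ => T^[n] z₀) (nhds w)) : Filter ℕ)
        (nhds w) :=
      (Filter.map_mono (Ultrafilter.of_le _)).trans Filter.map_comap_le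
    exact tendsto_nhds_unique (hlim _ z₀) hFle
  -- the two non-commuting right translations
  obtain ⟨g, h, hgh⟩ := hL
  let Sg : K₁ × L → K₁ × L := fun z => (z.1, z.2 * g)
  let Sh : K₁ × L → K₁ × L := fun z => (z.1, z.2 * h)
  have hSgcont : Continuous Sg := continuous_fst.prodMk (continuous_snd.mul continuous_const)
  have hShcont : Continuous Sh := continuous_fst.prodMk (continuous_snd.mul continuous_const)
  have hSgT : ∀ (n : ℕ) (z), Sg (T^[n] z) = T^[n] (Sg z) :=
    hext Sg (fun z => by simp only [Sg, hT, mul_assoc])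
  have hShT : ∀ (n : ℕ) (z), Sh (T^[n] z) = T^[n] (Sh z) :=
    hext Sh (fun z => by simp only [Sh, hT, mul_assoc])
  -- Sg equals a limit map
  have hSeq : ∀ (S : K₁ × L → K₁ × L), Continuous S →
      (∀ (n : ℕ) (z), S (T^[n] z) = T^[n] (S z)) →
      ∀ F : Ultrafilter ℕ, lf F z₀ = S z₀ → S = lf F := by
    intro S hScont hScomm F hF
    funext w
    obtain ⟨G, hG⟩ := hexists w
    calc S w = S (lf G z₀) := by rw [hG]
    _ = lf G (S z₀) := hcomm G S hScont hScomm z₀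
    _ = lf G (lf F z₀) := by rw [hF]
    _ = lf F (lf G z₀) := hcomm F (lf G) (hucont G) (hlcommT G) z₀
    _ = lf F w := by rw [hG]
  obtain ⟨F, hF⟩ := hexists (Sg z₀)
  obtain ⟨F', hF'⟩ := hexists (Sh z₀)
  have hSgeq : Sg = lf F := hSeq Sg hSgcont hSgT F hF
  have hSheq : Sh = lf F' := hSeq Sh hShcont hShT F' hF'
  have hfinal : Sg (Sh (1, 1)) = Sh (Sg (1, 1)) := by
    rw [hSgeq, hSheq]
    exact hcomm F' (lf F) (hucont F) (hlcommT F) (1, 1)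
  have : h * g = g * h := by
    have h1 := congrArg Prod.snd hfinal
    simpa [Sg, Sh, one_mul] using h1
  exact hgh (by rw [this])
end
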